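/- Let c, D > 0 and let G be a finite Borel measure on [0,∞). For every fixed t ≥ 0, the integral ∫_0^∞ |R(1, t+h, t)| dh is finite if and only if ∫_{[0, c/(2D))} μ^{−2} G(dμ) < ∞ (with the convention that the integrand equals +∞ at μ = 0, so that finiteness forces G({0}) = 0). That is, the spherical hyperbolic diffusion random field is short-range dependent at coincident spatial points if and only if μ^{−2}G(dμ) is integrable in a neighbourhood of zero. -/

import Mathlib

open MeasureTheory Real Set

/-- `H̃₁(μ,t)` for the subcritical regime `0 ≤ μ < c/(2D)`. -/
noncomputable def Htilde1 (c D μ t : ℝ) : ℝ :=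
  Real.exp (-(c ^ 2 * t) / (2 * D)) *
    (Real.cosh (c * t * Real.sqrt (c ^ 2 / (4 * D ^ 2) - μ ^ 2)) +
      c / (2 * D * Real.sqrt (c ^ 2 / (4 * D ^ 2) - μ ^ 2)) *
        Real.sinh (c * t * Real.sqrt (c ^ 2 / (4 * D ^ 2) - μ ^ 2)))

/-- `H̃₂(μ,t)` for the supercritical regime `μ > c/(2D)`. -/
noncomputable def Htilde2 (c D μ t : ℝ) : ℝ :=
  Real.exp (-(c ^ 2 * t) / (2 * D)) *
    (Real.cos (c * t * Real.sqrt (μ ^ 2 - c ^ 2 / (4 * D ^ 2))) +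
      c / (2 * D * Real.sqrt (μ ^ 2 - c ^ 2 / (4 * D ^ 2))) *
        Real.sin (c * t * Real.sqrt (μ ^ 2 - c ^ 2 / (4 * D ^ 2))))

/-- `H̃(μ,t)`, pieced together from `H̃₁`, the value at `μ = c/(2D)`, and `H̃₂`. -/
noncomputable def Htilde (c D μ t : ℝ) : ℝ :=
  if μ < c / (2 * D) then Htilde1 c D μ t
  else if μ = c / (2 * D) then Real.exp (-(c ^ 2 * t) / (2 * D)) * (1 + c ^ 2 * t / (2 * D))
  else Htilde2 c D μ t

open Filter Topology

/-! ### Auxiliary scalar lemmas -/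

lemma sinh_le_mul_cosh {x : ℝ} (hx : 0 ≤ x) : Real.sinh x ≤ x * Real.cosh x := by
  have h : MonotoneOn (fun y : ℝ => y * Real.cosh y - Real.sinh y) (Ici 0) := by
    apply monotoneOn_of_deriv_nonneg (convex_Ici 0)
    · fun_prop
    · intro y hy
      exact ((differentiableAt_id.mul Real.differentiable_cosh.differentiableAt).sub
        Real.differentiable_sinh.differentiableAt).differentiableWithinAt
    · intro y hy
      rw [interior_Ici] at hy
      have : deriv (fun y : ℝ => y * Real.cosh y - Real.sinh y) y = y * Real.sinh y := by
        rw [deriv_fun_sub, deriv_fun_mul] <;>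
          simp [Real.deriv_cosh, Real.deriv_sinh] <;> fun_prop
      rw [this]
      exact mul_nonneg hy.le (Real.sinh_nonneg_iff.2 hy.le)
  have := h (self_mem_Ici) hx hx
  simpa using this

lemma cosh_le_exp' {x : ℝ} (hx : 0 ≤ x) : Real.cosh x ≤ Real.exp x := by
  rw [Real.cosh_eq]
  nlinarith [Real.exp_le_exp.2 (neg_le_self hx), Real.exp_pos x, Real.exp_pos (-x)]

lemma exp_le_cosh_add_sinh {x k : ℝ} (hx : 0 ≤ x) (hk : 1 ≤ k) :
    Real.exp x ≤ Real.cosh x + k * Real.sinh x := by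
  rw [Real.cosh_eq, Real.sinh_eq]
  nlinarith [Real.sinh_nonneg_iff.2 hx, Real.sinh_eq x, Real.exp_pos (-x)]

lemma one_add_le_exp {b β h : ℝ} (hb : 0 ≤ b) (hβ : 0 < β) (hh : 0 ≤ h) :
    1 + b * h ≤ (1 + 2 * b / β) * Real.exp (β / 2 * h) := by
  have h1 : β / 2 * h + 1 ≤ Real.exp (β / 2 * h) := Real.add_one_le_exp _
  have h2 : 0 ≤ 2 * b / β := by positivity
  have h3 : 2 * b / β * (β / 2 * h) = b * h := by field_simp
  nlinarith [mul_le_mul_of_nonneg_left h1 h2]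

/-! ### The decay rate `lam` -/

noncomputable def lam (c D μ : ℝ) : ℝ :=
  c ^ 2 / (2 * D) - c * Real.sqrt (c ^ 2 / (4 * D ^ 2) - μ ^ 2)

section scalar
variable {c D μ : ℝ}

lemma a_le (hc : 0 < c) (hD : 0 < D) :
    Real.sqrt (c ^ 2 / (4 * D ^ 2) - μ ^ 2) ≤ c / (2 * D) := by
  rw [show c ^ 2 / (4 * D ^ 2) = (c / (2 * D)) ^ 2 by ring]
  calc Real.sqrt ((c / (2 * D)) ^ 2 - μ ^ 2) ≤ Real.sqrt ((c / (2 * D)) ^ 2) :=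
        Real.sqrt_le_sqrt (by nlinarith)
    _ = c / (2 * D) := Real.sqrt_sq (by positivity)

lemma a_pos (hc : 0 < c) (hD : 0 < D) (hμ : 0 ≤ μ) (hκ : μ < c / (2 * D)) :
    0 < Real.sqrt (c ^ 2 / (4 * D ^ 2) - μ ^ 2) := by
  apply Real.sqrt_pos.2
  have : μ ^ 2 < (c / (2 * D)) ^ 2 := by nlinarith
  have h4 : (c / (2 * D)) ^ 2 = c ^ 2 / (4 * D ^ 2) := by ring
  linarith [h4 ▸ this]

lemma lam_nonneg (hc : 0 < c) (hD : 0 < D) : 0 ≤ lam c D μ := by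
  have := a_le (μ := μ) hc hD
  unfold lam
  have : c * Real.sqrt (c ^ 2 / (4 * D ^ 2) - μ ^ 2) ≤ c * (c / (2 * D)) :=
    mul_le_mul_of_nonneg_left this hc.le
  have h : c * (c / (2 * D)) = c ^ 2 / (2 * D) := by ring
  linarith [h ▸ this]

lemma lam_le (hc : 0 < c) (hD : 0 < D) : lam c D μ ≤ c ^ 2 / (2 * D) := by
  unfold lam
  have := Real.sqrt_nonneg (c ^ 2 / (4 * D ^ 2) - μ ^ 2)
  nlinarith

lemma lam_mul (hc : 0 < c) (hD : 0 < D) (hμ : 0 ≤ μ) (hκ : μ < c / (2 * D)) :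
    lam c D μ * (c ^ 2 / (2 * D) + c * Real.sqrt (c ^ 2 / (4 * D ^ 2) - μ ^ 2))
      = c ^ 2 * μ ^ 2 := by
  have hsq : Real.sqrt (c ^ 2 / (4 * D ^ 2) - μ ^ 2) ^ 2 = c ^ 2 / (4 * D ^ 2) - μ ^ 2 :=
    Real.sq_sqrt (by nlinarith [a_pos hc hD hμ hκ, Real.sqrt_pos.1 (a_pos hc hD hμ hκ)])
  unfold lam
  have expand : (c ^ 2 / (2 * D) - c * Real.sqrt (c ^ 2 / (4 * D ^ 2) - μ ^ 2)) *
      (c ^ 2 / (2 * D) + c * Real.sqrt (c ^ 2 / (4 * D ^ 2) - μ ^ 2))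
      = (c ^ 2 / (2 * D)) ^ 2 - c ^ 2 * Real.sqrt (c ^ 2 / (4 * D ^ 2) - μ ^ 2) ^ 2 := by ring
  rw [expand, hsq]
  field_simp
  ring

lemma lam_lb (hc : 0 < c) (hD : 0 < D) (hμ : 0 ≤ μ) (hκ : μ < c / (2 * D)) :
    D * μ ^ 2 ≤ lam c D μ := by
  set A := Real.sqrt (c ^ 2 / (4 * D ^ 2) - μ ^ 2) with hA
  have h1 : c * A ≤ c ^ 2 / (2 * D) := by
    have := a_le (μ := μ) hc hD
    calc c * A ≤ c * (c / (2 * D)) := mul_le_mul_of_nonneg_left this hc.le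
      _ = c ^ 2 / (2 * D) := by ring
  have h2 := lam_mul hc hD hμ hκ
  have hS : 0 < c ^ 2 / (2 * D) + c * A := by positivity
  have hSle : c ^ 2 / (2 * D) + c * A ≤ c ^ 2 / D := by
    have : c ^ 2 / (2 * D) + c ^ 2 / (2 * D) = c ^ 2 / D := by ring
    linarith
  have key : D * μ ^ 2 * (c ^ 2 / (2 * D) + c * A) ≤ lam c D μ * (c ^ 2 / (2 * D) + c * A) := by
    rw [h2]
    calc D * μ ^ 2 * (c ^ 2 / (2 * D) + c * A) ≤ D * μ ^ 2 * (c ^ 2 / D) := by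
          exact mul_le_mul_of_nonneg_left hSle (by positivity)
      _ = c ^ 2 * μ ^ 2 := by field_simp
  exact le_of_mul_le_mul_right key hS

lemma lam_ub (hc : 0 < c) (hD : 0 < D) (hμ : 0 ≤ μ) (hκ : μ < c / (2 * D)) :
    lam c D μ ≤ 2 * D * μ ^ 2 := by
  set A := Real.sqrt (c ^ 2 / (4 * D ^ 2) - μ ^ 2) with hA
  have h2 := lam_mul hc hD hμ hκ
  have hA0 : 0 ≤ A := Real.sqrt_nonneg _
  have hSge : c ^ 2 / (2 * D) ≤ c ^ 2 / (2 * D) + c * A := by nlinarith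
  have hS : 0 < c ^ 2 / (2 * D) + c * A := by positivity
  have key : lam c D μ * (c ^ 2 / (2 * D)) ≤ 2 * D * μ ^ 2 * (c ^ 2 / (2 * D)) := by
    have h3 : lam c D μ * (c ^ 2 / (2 * D)) ≤ lam c D μ * (c ^ 2 / (2 * D) + c * A) :=
      mul_le_mul_of_nonneg_left hSge (lam_nonneg hc hD)
    have h4 : 2 * D * μ ^ 2 * (c ^ 2 / (2 * D)) = c ^ 2 * μ ^ 2 := by field_simp
    rw [h4]; rw [h2] at h3; exact h3
  exact le_of_mul_le_mul_right key (by positivity)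

lemma lam_zero (hc : 0 < c) (hD : 0 < D) : lam c D 0 = 0 := by
  unfold lam
  rw [show c ^ 2 / (4 * D ^ 2) - (0:ℝ) ^ 2 = (c / (2 * D)) ^ 2 by ring,
    Real.sqrt_sq (by positivity)]
  field_simp
  ring

end scalar

/-! ### Pointwise bounds on `Htilde1` / `Htilde` -/

section bounds
variable {c D μ s : ℝ}

lemma Htilde1_nonneg (hc : 0 < c) (hD : 0 < D) (hs : 0 ≤ s) : 0 ≤ Htilde1 c D μ s := by
  unfold Htilde1
  have hA : 0 ≤ Real.sqrt (c ^ 2 / (4 * D ^ 2) - μ ^ 2) := Real.sqrt_nonneg _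
  have hx : 0 ≤ c * s * Real.sqrt (c ^ 2 / (4 * D ^ 2) - μ ^ 2) := by positivity
  have h1 : 0 ≤ Real.sinh (c * s * Real.sqrt (c ^ 2 / (4 * D ^ 2) - μ ^ 2)) :=
    Real.sinh_nonneg_iff.2 hx
  have h2 : (0:ℝ) < Real.cosh (c * s * Real.sqrt (c ^ 2 / (4 * D ^ 2) - μ ^ 2)) :=
    Real.cosh_pos _
  positivity

lemma Htilde1_le_exp (hc : 0 < c) (hD : 0 < D)
    (hA : 0 < Real.sqrt (c ^ 2 / (4 * D ^ 2) - μ ^ 2)) (hs : 0 ≤ s) :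
    Htilde1 c D μ s ≤ (1 + c ^ 2 * s / (2 * D)) * Real.exp (-(lam c D μ * s)) := by
  set A := Real.sqrt (c ^ 2 / (4 * D ^ 2) - μ ^ 2) with hAdef
  set x := c * s * A with hxdef
  have hx : 0 ≤ x := by positivity
  have hcoef : c / (2 * D * A) * x = c ^ 2 * s / (2 * D) := by
    field_simp [hxdef]; ring
  have h1 : Real.cosh x + c / (2 * D * A) * Real.sinh x
      ≤ (1 + c ^ 2 * s / (2 * D)) * Real.cosh x := by
    have := sinh_le_mul_cosh hx
    have hk : 0 ≤ c / (2 * D * A) := by positivity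
    calc Real.cosh x + c / (2 * D * A) * Real.sinh x
        ≤ Real.cosh x + c / (2 * D * A) * (x * Real.cosh x) := by nlinarith
      _ = (1 + c ^ 2 * s / (2 * D)) * Real.cosh x := by rw [← hcoef]; ring
  have h2 : Real.cosh x ≤ Real.exp x := cosh_le_exp' hx
  have hB : (0:ℝ) ≤ 1 + c ^ 2 * s / (2 * D) := by positivity
  unfold Htilde1
  rw [← hAdef, ← hxdef]
  calc Real.exp (-(c ^ 2 * s) / (2 * D)) * (Real.cosh x + c / (2 * D * A) * Real.sinh x)
      ≤ Real.exp (-(c ^ 2 * s) / (2 * D)) * ((1 + c ^ 2 * s / (2 * D)) * Real.exp x) := by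
        have := (Real.exp_pos (-(c ^ 2 * s) / (2 * D))).le
        apply mul_le_mul_of_nonneg_left _ this
        calc Real.cosh x + c / (2 * D * A) * Real.sinh x
            ≤ (1 + c ^ 2 * s / (2 * D)) * Real.cosh x := h1
          _ ≤ (1 + c ^ 2 * s / (2 * D)) * Real.exp x := mul_le_mul_of_nonneg_left h2 hB
    _ = (1 + c ^ 2 * s / (2 * D)) * Real.exp (-(lam c D μ * s)) := by
        rw [show Real.exp (-(c ^ 2 * s) / (2 * D)) * ((1 + c ^ 2 * s / (2 * D)) * Real.exp x)
            = (1 + c ^ 2 * s / (2 * D)) * (Real.exp (-(c ^ 2 * s) / (2 * D)) * Real.exp x)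
          from by ring, ← Real.exp_add]
        congr 2
        unfold lam; rw [hxdef]; ring

lemma exp_le_Htilde1 (hc : 0 < c) (hD : 0 < D) (hμ : 0 ≤ μ) (hκ : μ < c / (2 * D))
    (hs : 0 ≤ s) : Real.exp (-(lam c D μ * s)) ≤ Htilde1 c D μ s := by
  set A := Real.sqrt (c ^ 2 / (4 * D ^ 2) - μ ^ 2) with hAdef
  have hA : 0 < A := a_pos hc hD hμ hκ
  have hAle : A ≤ c / (2 * D) := a_le hc hD
  set x := c * s * A with hxdef
  have hx : 0 ≤ x := by positivity
  have hk : 1 ≤ c / (2 * D * A) := by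
    rw [le_div_iff₀ (by positivity)]
    calc 1 * (2 * D * A) = 2 * D * A := by ring
      _ ≤ 2 * D * (c / (2 * D)) := by nlinarith
      _ = c := by field_simp
  have h1 := exp_le_cosh_add_sinh hx hk
  unfold Htilde1
  rw [← hAdef, ← hxdef]
  have key : Real.exp (-(lam c D μ * s)) =
      Real.exp (-(c ^ 2 * s) / (2 * D)) * Real.exp x := by
    rw [← Real.exp_add]; congr 1; unfold lam; rw [hxdef]; ring
  rw [key]
  exact mul_le_mul_of_nonneg_left h1 (Real.exp_pos _).le

lemma Htilde1_le_two_exp (hc : 0 < c) (hD : 0 < D) (hμ : 0 ≤ μ) (hμ' : μ ≤ c / (4 * D))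
    (hs : 0 ≤ s) : Htilde1 c D μ s ≤ 2 * Real.exp (-(lam c D μ * s)) := by
  set A := Real.sqrt (c ^ 2 / (4 * D ^ 2) - μ ^ 2) with hAdef
  have hA : c / (6 * D) ≤ A := by
    have h1 : (c / (6 * D)) ^ 2 ≤ c ^ 2 / (4 * D ^ 2) - μ ^ 2 := by
      have hμsq : μ ^ 2 ≤ (c / (4 * D)) ^ 2 := by nlinarith
      have e1 : (c / (6 * D)) ^ 2 = (1/36) * (c ^ 2 / D ^ 2) := by ring
      have e2 : (c / (4 * D)) ^ 2 = (1/16) * (c ^ 2 / D ^ 2) := by ring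
      have e3 : c ^ 2 / (4 * D ^ 2) = (1/4) * (c ^ 2 / D ^ 2) := by ring
      have hu : (0:ℝ) ≤ c ^ 2 / D ^ 2 := by positivity
      rw [e1, e3]; rw [e2] at hμsq; linarith
    calc c / (6 * D) = Real.sqrt ((c / (6 * D)) ^ 2) := (Real.sqrt_sq (by positivity)).symm
      _ ≤ A := Real.sqrt_le_sqrt h1
  have hA0 : 0 < A := lt_of_lt_of_le (by positivity) hA
  have hk : c / (2 * D * A) ≤ 3 := by
    rw [div_le_iff₀ (by positivity)]
    calc c = 6 * D * (c / (6 * D)) := by field_simp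
      _ ≤ 6 * D * A := by nlinarith
      _ = 3 * (2 * D * A) := by ring
  set x := c * s * A with hxdef
  have hx : 0 ≤ x := by positivity
  have h1 : Real.cosh x + c / (2 * D * A) * Real.sinh x ≤ 2 * Real.exp x := by
    have hsinh : 0 ≤ Real.sinh x := Real.sinh_nonneg_iff.2 hx
    have hcosh := Real.cosh_eq x
    have hsinheq := Real.sinh_eq x
    nlinarith [Real.exp_pos (-x), Real.exp_pos x]
  unfold Htilde1
  rw [← hAdef, ← hxdef]
  have key : 2 * Real.exp (-(lam c D μ * s)) =
      Real.exp (-(c ^ 2 * s) / (2 * D)) * (2 * Real.exp x) := by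
    rw [mul_comm (Real.exp _), mul_assoc, ← Real.exp_add]
    congr 2; unfold lam; rw [hxdef]; ring
  rw [key]
  exact mul_le_mul_of_nonneg_left h1 (Real.exp_pos _).le

/-- bound for the supercritical + critical region -/
lemma abs_Htilde_le_of_ge (hc : 0 < c) (hD : 0 < D) (hκμ : c / (2 * D) ≤ μ) (hs : 0 ≤ s) :
    |Htilde c D μ s| ≤ (1 + c ^ 2 * s / (2 * D)) * Real.exp (-(c ^ 2 * s) / (2 * D)) := by
  unfold Htilde
  rcases eq_or_lt_of_le hκμ with heq | hlt
  · rw [if_neg (by rw [← heq]; exact lt_irrefl _), if_pos heq.symm]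
    rw [abs_mul, Real.abs_exp, abs_of_nonneg (by positivity : (0:ℝ) ≤ 1 + c ^ 2 * s / (2 * D))]
    rw [mul_comm]
  · rw [if_neg (not_lt.2 hlt.le), if_neg (ne_of_gt hlt)]
    unfold Htilde2
    set b := Real.sqrt (μ ^ 2 - c ^ 2 / (4 * D ^ 2)) with hb
    set y := c * s * b with hy
    have hbnn : 0 ≤ b := Real.sqrt_nonneg _
    have hynn : 0 ≤ y := by positivity
    rw [abs_mul, Real.abs_exp]
    have key : |Real.cos y + c / (2 * D * b) * Real.sin y| ≤ 1 + c ^ 2 * s / (2 * D) := by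
      calc |Real.cos y + c / (2 * D * b) * Real.sin y|
          ≤ |Real.cos y| + |c / (2 * D * b) * Real.sin y| := abs_add_le _ _
        _ ≤ 1 + c ^ 2 * s / (2 * D) := by
            apply add_le_add (Real.abs_cos_le_one y)
            rw [abs_mul]
            rcases eq_or_lt_of_le hbnn with hb0 | hb0
            · rw [← hb0, mul_zero, div_zero, abs_zero, zero_mul]
              positivity
            · have h1 : |c / (2 * D * b)| = c / (2 * D * b) := abs_of_pos (by positivity)
              have h2 : |Real.sin y| ≤ y :=
                (Real.abs_sin_le_abs (x := y)).trans_eq (abs_of_nonneg hynn)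
              calc |c / (2 * D * b)| * |Real.sin y| ≤ c / (2 * D * b) * y := by
                    rw [h1]; exact mul_le_mul_of_nonneg_left h2 (by positivity)
                _ = c ^ 2 * s / (2 * D) := by rw [hy]; field_simp
    calc Real.exp (-(c ^ 2 * s) / (2 * D)) * |Real.cos y + c / (2 * D * b) * Real.sin y|
        ≤ Real.exp (-(c ^ 2 * s) / (2 * D)) * (1 + c ^ 2 * s / (2 * D)) :=
          mul_le_mul_of_nonneg_left key (Real.exp_pos _).le
      _ = (1 + c ^ 2 * s / (2 * D)) * Real.exp (-(c ^ 2 * s) / (2 * D)) := mul_comm _ _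

/-- global bound -/
lemma abs_Htilde_le (hc : 0 < c) (hD : 0 < D) (hs : 0 ≤ s) (μ : ℝ) :
    |Htilde c D μ s| ≤ 1 + c ^ 2 * s / (2 * D) := by
  rcases lt_or_ge μ (c / (2 * D)) with hμκ | hκμ
  · rw [Htilde, if_pos hμκ]
    rcases le_or_gt (c ^ 2 / (4 * D ^ 2) - μ ^ 2) 0 with hAn | hAp
    · have hA0 : Real.sqrt (c ^ 2 / (4 * D ^ 2) - μ ^ 2) = 0 := Real.sqrt_eq_zero'.2 hAn
      unfold Htilde1
      rw [hA0]
      simp only [mul_zero, Real.sinh_zero, Real.cosh_zero, add_zero, mul_one]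
      rw [Real.abs_exp]
      have h1 : Real.exp (-(c ^ 2 * s) / (2 * D)) ≤ 1 := by
        rw [neg_div]; exact Real.exp_le_one_iff.2 (neg_nonpos.2 (by positivity))
      have : (0:ℝ) ≤ c ^ 2 * s / (2 * D) := by positivity
      linarith
    · have hA : 0 < Real.sqrt (c ^ 2 / (4 * D ^ 2) - μ ^ 2) := Real.sqrt_pos.2 hAp
      rw [abs_of_nonneg (Htilde1_nonneg hc hD hs)]
      calc Htilde1 c D μ s ≤ (1 + c ^ 2 * s / (2 * D)) * Real.exp (-(lam c D μ * s)) :=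
            Htilde1_le_exp hc hD hA hs
        _ ≤ (1 + c ^ 2 * s / (2 * D)) * 1 := by
            apply mul_le_mul_of_nonneg_left _ (by positivity)
            exact Real.exp_le_one_iff.2
              (neg_nonpos.2 (mul_nonneg (lam_nonneg hc hD) hs))
        _ = 1 + c ^ 2 * s / (2 * D) := mul_one _
  · calc |Htilde c D μ s| ≤ (1 + c ^ 2 * s / (2 * D)) * Real.exp (-(c ^ 2 * s) / (2 * D)) :=
        abs_Htilde_le_of_ge hc hD hκμ hs
      _ ≤ (1 + c ^ 2 * s / (2 * D)) * 1 := by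
          apply mul_le_mul_of_nonneg_left _ (by positivity)
          rw [neg_div]; exact Real.exp_le_one_iff.2 (neg_nonpos.2 (by positivity))
      _ = 1 + c ^ 2 * s / (2 * D) := mul_one _

end bounds

/-! ### Measurability -/

lemma measurable_lam (c D : ℝ) : Measurable (fun μ => lam c D μ) := by
  unfold lam
  fun_prop

lemma measurable_Htilde (c D s : ℝ) : Measurable (fun μ => Htilde c D μ s) := by
  unfold Htilde
  apply Measurable.ite (measurableSet_lt measurable_id measurable_const)
  · unfold Htilde1
    apply Measurable.mul measurable_const
    apply Measurable.add
    · fun_prop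
    · apply Measurable.mul
      · apply Measurable.div measurable_const
        fun_prop
      · fun_prop
  · apply Measurable.ite (show MeasurableSet {x : ℝ | x = c / (2 * D)} by
        simpa using MeasurableSet.singleton (c / (2 * D))) measurable_const
    unfold Htilde2
    apply Measurable.mul measurable_const
    apply Measurable.add
    · fun_prop
    · apply Measurable.mul
      · apply Measurable.div measurable_const
        fun_prop
      · fun_prop

/-! ### Exponential integrals -/

lemma lintegral_exp_neg_mul {b : ℝ} (hb : 0 < b) :
    ∫⁻ h in Ici (0:ℝ), ENNReal.ofReal (Real.exp (-(b * h))) = ENNReal.ofReal (1 / b) := by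
  rw [setLIntegral_congr (Ioi_ae_eq_Ici (a := (0:ℝ))).symm]
  have hi : IntegrableOn (fun x : ℝ => Real.exp (-(b * x))) (Ioi 0) := by
    simpa [neg_mul] using exp_neg_integrableOn_Ioi 0 hb
  rw [← ofReal_integral_eq_lintegral_ofReal hi (ae_of_all _ fun x => (Real.exp_pos _).le)]
  congr 1
  have hderiv : ∀ x ∈ Ici (0:ℝ), HasDerivAt (fun x : ℝ => -(1 / b) * Real.exp (-(b * x)))
      (Real.exp (-(b * x))) x := by
    intro x _
    have h1 : HasDerivAt (fun x : ℝ => -(b * x)) (-b) x := by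
      simpa [Pi.neg_def] using ((hasDerivAt_id x).const_mul b).neg
    have h2 := (h1.exp).const_mul (-(1 / b))
    refine h2.congr_deriv ?_
    field_simp
  have htend : Tendsto (fun x : ℝ => -(1 / b) * Real.exp (-(b * x))) atTop (𝓝 0) := by
    have : Tendsto (fun x : ℝ => Real.exp (-(b * x))) atTop (𝓝 0) := by
      apply Real.tendsto_exp_atBot.comp
      simpa [neg_mul] using tendsto_id.const_mul_atTop_of_neg (neg_neg_iff_pos.2 hb) |>.comp tendsto_id
    simpa using this.const_mul (-(1 / b))
  rw [integral_Ioi_of_hasDerivAt_of_tendsto' hderiv hi htend]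
  simp

lemma lintegral_ofReal_exp_lt_top {M b : ℝ} (hb : 0 < b) :
    ∫⁻ h in Ici (0:ℝ), ENNReal.ofReal (M * Real.exp (-(b * h))) < ⊤ := by
  have step : ∀ h : ℝ, ENNReal.ofReal (M * Real.exp (-(b * h)))
      ≤ ENNReal.ofReal |M| * ENNReal.ofReal (Real.exp (-(b * h))) := by
    intro h
    rw [← ENNReal.ofReal_mul (abs_nonneg M)]
    exact ENNReal.ofReal_le_ofReal
      (mul_le_mul_of_nonneg_right (le_abs_self M) (Real.exp_pos _).le)
  calc ∫⁻ h in Ici (0:ℝ), ENNReal.ofReal (M * Real.exp (-(b * h)))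
      ≤ ∫⁻ h in Ici (0:ℝ), ENNReal.ofReal |M| * ENNReal.ofReal (Real.exp (-(b * h))) :=
        lintegral_mono step
    _ = ENNReal.ofReal |M| * ENNReal.ofReal (1 / b) := by
        rw [lintegral_const_mul' _ _ ENNReal.ofReal_ne_top, lintegral_exp_neg_mul hb]
    _ < ⊤ := ENNReal.mul_lt_top ENNReal.ofReal_lt_top ENNReal.ofReal_lt_top

/-! ### scalar product bound -/

lemma scalar_crit {Kc β lamv t h : ℝ} (hKc : 0 ≤ Kc) (hβ : 0 < β) (hl : β ≤ lamv)
    (ht : 0 ≤ t) (hh : 0 ≤ h) :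
    (1 + Kc * (t + h)) * (1 + Kc * t) * Real.exp (-(lamv * (2 * t + h)))
      ≤ ((1 + Kc * t) ^ 2 * (1 + 2 * Kc / β)) * Real.exp (-(β / 2 * h)) := by
  have h0 : 0 < lamv := lt_of_lt_of_le hβ hl
  have e1 : Real.exp (-(lamv * (2 * t + h))) ≤ Real.exp (-(β * h)) :=
    Real.exp_le_exp.2 (by nlinarith)
  have e2 : 1 + Kc * (t + h) ≤ (1 + Kc * t) * (1 + Kc * h) := by
    nlinarith [mul_nonneg (mul_nonneg (mul_nonneg hKc hKc) ht) hh]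
  have e3 : 1 + Kc * h ≤ (1 + 2 * Kc / β) * Real.exp (β / 2 * h) := one_add_le_exp hKc hβ hh
  have e4 : Real.exp (β / 2 * h) * Real.exp (-(β * h)) = Real.exp (-(β / 2 * h)) := by
    rw [← Real.exp_add]; congr 1; ring
  calc (1 + Kc * (t + h)) * (1 + Kc * t) * Real.exp (-(lamv * (2 * t + h)))
      ≤ ((1 + Kc * t) * (1 + Kc * h)) * (1 + Kc * t) * Real.exp (-(β * h)) := by
        apply mul_le_mul (mul_le_mul_of_nonneg_right e2 (by positivity)) e1
          (Real.exp_pos _).le (by positivity)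
    _ = (1 + Kc * t) ^ 2 * ((1 + Kc * h) * Real.exp (-(β * h))) := by ring
    _ ≤ (1 + Kc * t) ^ 2 * (((1 + 2 * Kc / β) * Real.exp (β / 2 * h)) * Real.exp (-(β * h))) := by
        apply mul_le_mul_of_nonneg_left _ (by positivity)
        exact mul_le_mul_of_nonneg_right e3 (Real.exp_pos _).le
    _ = ((1 + Kc * t) ^ 2 * (1 + 2 * Kc / β)) * Real.exp (-(β / 2 * h)) := by
        rw [mul_assoc (1 + 2 * Kc / β), e4]; ring

/-! ### product bounds at the `Htilde` level -/

section prod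
variable {c D μ t h : ℝ}

lemma exp_le_Htilde_mul (hc : 0 < c) (hD : 0 < D) (hμ : μ ∈ Ico (0:ℝ) (c / (2 * D)))
    (ht : 0 ≤ t) (hh : 0 ≤ h) :
    Real.exp (-(lam c D μ * (2 * t + h))) ≤ Htilde c D μ (t + h) * Htilde c D μ t := by
  have h1 := exp_le_Htilde1 hc hD hμ.1 hμ.2 (by linarith : 0 ≤ t + h)
  have h2 := exp_le_Htilde1 hc hD hμ.1 hμ.2 ht
  simp only [Htilde, if_pos hμ.2]
  calc Real.exp (-(lam c D μ * (2 * t + h)))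
      = Real.exp (-(lam c D μ * (t + h))) * Real.exp (-(lam c D μ * t)) := by
        rw [← Real.exp_add]; congr 1; ring
    _ ≤ Htilde1 c D μ (t + h) * Htilde1 c D μ t :=
        mul_le_mul h1 h2 (Real.exp_pos _).le (Htilde1_nonneg hc hD (by linarith))

lemma Htilde_mul_le_small (hc : 0 < c) (hD : 0 < D) (hμ : μ ∈ Ico (0:ℝ) (c / (4 * D)))
    (ht : 0 ≤ t) (hh : 0 ≤ h) :
    Htilde c D μ (t + h) * Htilde c D μ t ≤ 4 * Real.exp (-(lam c D μ * (2 * t + h))) := by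
  have hκ : μ < c / (2 * D) := by
    have : c / (4 * D) ≤ c / (2 * D) := by
      rw [div_le_div_iff₀ (by positivity) (by positivity)]; nlinarith
    linarith [hμ.2]
  have h1 := Htilde1_le_two_exp hc hD hμ.1 hμ.2.le (by linarith : 0 ≤ t + h)
  have h2 := Htilde1_le_two_exp hc hD hμ.1 hμ.2.le ht
  simp only [Htilde, if_pos hκ]
  calc Htilde1 c D μ (t + h) * Htilde1 c D μ t
      ≤ (2 * Real.exp (-(lam c D μ * (t + h)))) * (2 * Real.exp (-(lam c D μ * t))) :=
        mul_le_mul h1 h2 (Htilde1_nonneg hc hD ht) (by positivity)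
    _ = 4 * (Real.exp (-(lam c D μ * (t + h))) * Real.exp (-(lam c D μ * t))) := by ring
    _ = 4 * Real.exp (-(lam c D μ * (2 * t + h))) := by
        rw [← Real.exp_add]; congr 2; ring

lemma Htilde_mul_le_crit (hc : 0 < c) (hD : 0 < D)
    (hμ : μ ∈ Ico (c / (4 * D)) (c / (2 * D))) (ht : 0 ≤ t) (hh : 0 ≤ h) :
    Htilde c D μ (t + h) * Htilde c D μ t
      ≤ ((1 + c ^ 2 / (2 * D) * t) ^ 2 * (1 + 2 * (c ^ 2 / (2 * D)) / (c ^ 2 / (16 * D))))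
          * Real.exp (-(c ^ 2 / (16 * D) / 2 * h)) := by
  have hμ0 : 0 ≤ μ := le_trans (by positivity) hμ.1
  have hA := a_pos hc hD hμ0 hμ.2
  have h1 := Htilde1_le_exp hc hD hA (by linarith : 0 ≤ t + h)
  have h2 := Htilde1_le_exp hc hD hA ht
  simp only [Htilde, if_pos hμ.2]
  have hβ : (0:ℝ) < c ^ 2 / (16 * D) := by positivity
  have hβlam : c ^ 2 / (16 * D) ≤ lam c D μ := by
    have hlb := lam_lb hc hD hμ0 hμ.2
    have : c ^ 2 / (16 * D) ≤ D * μ ^ 2 := by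
      have hsq : (c / (4 * D)) ^ 2 ≤ μ ^ 2 := by
        have h4 : (0:ℝ) ≤ c / (4 * D) := by positivity
        nlinarith [hμ.1]
      have e1 : D * (c / (4 * D)) ^ 2 = c ^ 2 / (16 * D) := by field_simp; ring
      nlinarith
    linarith
  calc Htilde1 c D μ (t + h) * Htilde1 c D μ t
      ≤ ((1 + c ^ 2 * (t + h) / (2 * D)) * Real.exp (-(lam c D μ * (t + h)))) *
          ((1 + c ^ 2 * t / (2 * D)) * Real.exp (-(lam c D μ * t))) :=
        mul_le_mul h1 h2 (Htilde1_nonneg hc hD ht) (by positivity)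
    _ = (1 + c ^ 2 / (2 * D) * (t + h)) * (1 + c ^ 2 / (2 * D) * t)
          * Real.exp (-(lam c D μ * (2 * t + h))) := by
        rw [show ((1 + c ^ 2 * (t + h) / (2 * D)) * Real.exp (-(lam c D μ * (t + h)))) *
            ((1 + c ^ 2 * t / (2 * D)) * Real.exp (-(lam c D μ * t)))
            = (1 + c ^ 2 * (t + h) / (2 * D)) * (1 + c ^ 2 * t / (2 * D)) *
              (Real.exp (-(lam c D μ * (t + h))) * Real.exp (-(lam c D μ * t))) from by ring,
          ← Real.exp_add]
        have : -(lam c D μ * (t + h)) + -(lam c D μ * t) = -(lam c D μ * (2 * t + h)) := by ring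
        rw [this]
        ring_nf
    _ ≤ _ := scalar_crit (by positivity) hβ hβlam ht hh

lemma Htilde_mul_le_high (hc : 0 < c) (hD : 0 < D) (hκμ : c / (2 * D) ≤ μ)
    (ht : 0 ≤ t) (hh : 0 ≤ h) :
    |Htilde c D μ (t + h) * Htilde c D μ t|
      ≤ ((1 + c ^ 2 / (2 * D) * t) ^ 2 * 3) * Real.exp (-(c ^ 2 / (2 * D) / 2 * h)) := by
  rw [abs_mul]
  have h1 := abs_Htilde_le_of_ge hc hD hκμ (by linarith : 0 ≤ t + h)
  have h2 := abs_Htilde_le_of_ge hc hD hκμ ht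
  calc |Htilde c D μ (t + h)| * |Htilde c D μ t|
      ≤ ((1 + c ^ 2 * (t + h) / (2 * D)) * Real.exp (-(c ^ 2 * (t + h)) / (2 * D))) *
        ((1 + c ^ 2 * t / (2 * D)) * Real.exp (-(c ^ 2 * t) / (2 * D))) :=
        mul_le_mul h1 h2 (abs_nonneg _) (by positivity)
    _ = (1 + c ^ 2 / (2 * D) * (t + h)) * (1 + c ^ 2 / (2 * D) * t)
          * Real.exp (-(c ^ 2 / (2 * D) * (2 * t + h))) := by
        rw [show ((1 + c ^ 2 * (t + h) / (2 * D)) * Real.exp (-(c ^ 2 * (t + h)) / (2 * D))) *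
            ((1 + c ^ 2 * t / (2 * D)) * Real.exp (-(c ^ 2 * t) / (2 * D)))
            = (1 + c ^ 2 * (t + h) / (2 * D)) * (1 + c ^ 2 * t / (2 * D)) *
              (Real.exp (-(c ^ 2 * (t + h)) / (2 * D)) * Real.exp (-(c ^ 2 * t) / (2 * D)))
          from by ring, ← Real.exp_add]
        have : -(c ^ 2 * (t + h)) / (2 * D) + -(c ^ 2 * t) / (2 * D)
            = -(c ^ 2 / (2 * D) * (2 * t + h)) := by ring
        rw [this]
        ring_nf
    _ ≤ ((1 + c ^ 2 / (2 * D) * t) ^ 2 * (1 + 2 * (c ^ 2 / (2 * D)) / (c ^ 2 / (2 * D))))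
          * Real.exp (-(c ^ 2 / (2 * D) / 2 * h)) :=
        scalar_crit (by positivity) (by positivity) le_rfl ht hh
    _ = ((1 + c ^ 2 / (2 * D) * t) ^ 2 * 3) * Real.exp (-(c ^ 2 / (2 * D) / 2 * h)) := by
        have hx : 2 * (c ^ 2 / (2 * D)) / (c ^ 2 / (2 * D)) = 2 := by
          rw [mul_div_assoc, div_self (by positivity : (c ^ 2 / (2 * D)) ≠ 0)]; norm_num
        rw [hx]
        norm_num

end prod

/-! ### Integral-level lemmas -/

noncomputable def Rlow (c D : ℝ) (G : Measure ℝ) (t h : ℝ) : ℝ :=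
  ∫ μ in Ico (0:ℝ) (c / (2 * D)), Htilde c D μ (t + h) * Htilde c D μ t ∂G

noncomputable def Rhigh (c D : ℝ) (G : Measure ℝ) (t h : ℝ) : ℝ :=
  ∫ μ in Ici (c / (2 * D)), Htilde c D μ (t + h) * Htilde c D μ t ∂G

section integral
variable {c D t h : ℝ} {G : Measure ℝ} [IsFiniteMeasure G]

lemma integrableOn_Htilde_mul (hc : 0 < c) (hD : 0 < D) {s₁ s₂ : ℝ} (hs₁ : 0 ≤ s₁)
    (hs₂ : 0 ≤ s₂) (E : Set ℝ) :
    IntegrableOn (fun μ => Htilde c D μ s₁ * Htilde c D μ s₂) E G := by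
  apply Integrable.mono' (integrable_const ((1 + c ^ 2 * s₁ / (2 * D)) * (1 + c ^ 2 * s₂ / (2 * D))))
  · exact ((measurable_Htilde c D s₁).mul (measurable_Htilde c D s₂)).aestronglyMeasurable
  · apply ae_of_all
    intro μ
    rw [Real.norm_eq_abs, abs_mul]
    exact mul_le_mul (abs_Htilde_le hc hD hs₁ μ) (abs_Htilde_le hc hD hs₂ μ)
      (abs_nonneg _) (by positivity)

lemma R_split (hc : 0 < c) (hD : 0 < D) (ht : 0 ≤ t) (hh : 0 ≤ h) :
    (∫ μ in Ici (0:ℝ), Htilde c D μ (t + h) * Htilde c D μ t ∂G)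
      = Rlow c D G t h + Rhigh c D G t h := by
  have hκ : (0:ℝ) ≤ c / (2 * D) := by positivity
  rw [Rlow, Rhigh, ← setIntegral_union (by
      rw [Set.disjoint_left]
      intro x hx hx'
      exact absurd hx' (not_le.2 hx.2)) measurableSet_Ici
    (integrableOn_Htilde_mul hc hD (by linarith) ht _)
    (integrableOn_Htilde_mul hc hD (by linarith) ht _), Ico_union_Ici_eq_Ici hκ]

lemma Rlow_nonneg (hc : 0 < c) (hD : 0 < D) (ht : 0 ≤ t) (hh : 0 ≤ h) :
    0 ≤ Rlow c D G t h := by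
  apply setIntegral_nonneg measurableSet_Ico
  intro μ hμ
  simp only [Htilde, if_pos hμ.2]
  exact mul_nonneg (Htilde1_nonneg hc hD (by linarith)) (Htilde1_nonneg hc hD ht)

lemma ofReal_Rlow_eq (hc : 0 < c) (hD : 0 < D) (ht : 0 ≤ t) (hh : 0 ≤ h) :
    ENNReal.ofReal (Rlow c D G t h)
      = ∫⁻ μ in Ico (0:ℝ) (c / (2 * D)),
          ENNReal.ofReal (Htilde c D μ (t + h) * Htilde c D μ t) ∂G := by
  apply ofReal_integral_eq_lintegral_ofReal
    (integrableOn_Htilde_mul hc hD (by linarith) ht _)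
  apply (ae_restrict_iff' measurableSet_Ico).2
  apply ae_of_all
  intro μ hμ
  simp only [Htilde, if_pos hμ.2]
  exact mul_nonneg (Htilde1_nonneg hc hD (by linarith)) (Htilde1_nonneg hc hD ht)

lemma abs_Rhigh_le (hc : 0 < c) (hD : 0 < D) (ht : 0 ≤ t) (hh : 0 ≤ h) :
    |Rhigh c D G t h| ≤ ((G univ).toReal * ((1 + c ^ 2 / (2 * D) * t) ^ 2 * 3))
      * Real.exp (-(c ^ 2 / (2 * D) / 2 * h)) := by
  set C := ((1 + c ^ 2 / (2 * D) * t) ^ 2 * 3) * Real.exp (-(c ^ 2 / (2 * D) / 2 * h)) with hC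
  have hC0 : 0 ≤ C := by positivity
  have key : |Rhigh c D G t h| ≤ (G (Ici (c / (2 * D)))).toReal * C := by
    calc |Rhigh c D G t h|
        ≤ ∫ μ in Ici (c / (2 * D)), |Htilde c D μ (t + h) * Htilde c D μ t| ∂G := by
          unfold Rhigh
          simpa only [Real.norm_eq_abs] using
            norm_integral_le_integral_norm (μ := G.restrict (Ici (c / (2 * D))))
              (fun μ => Htilde c D μ (t + h) * Htilde c D μ t)
      _ ≤ ∫ _ in Ici (c / (2 * D)), C ∂G := by
          apply setIntegral_mono_on
            ((integrableOn_Htilde_mul hc hD (by linarith) ht _).abs)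
            (integrableOn_const (measure_ne_top _ _))
            measurableSet_Ici
          intro μ hμ
          exact Htilde_mul_le_high hc hD hμ ht hh
      _ = (G (Ici (c / (2 * D)))).toReal * C := by
          rw [setIntegral_const, smul_eq_mul]; rfl
  calc |Rhigh c D G t h| ≤ (G (Ici (c / (2 * D)))).toReal * C := key
    _ ≤ (G univ).toReal * C := by
        apply mul_le_mul_of_nonneg_right _ hC0
        exact ENNReal.toReal_mono (measure_ne_top G univ) (measure_mono (subset_univ _))
    _ = ((G univ).toReal * ((1 + c ^ 2 / (2 * D) * t) ^ 2 * 3))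
        * Real.exp (-(c ^ 2 / (2 * D) / 2 * h)) := by rw [hC]; ring

lemma lintegral_abs_Rhigh_lt_top (hc : 0 < c) (hD : 0 < D) (ht : 0 ≤ t) :
    ∫⁻ h in Ici (0:ℝ), ENNReal.ofReal |Rhigh c D G t h| < ⊤ := by
  apply lt_of_le_of_lt _ (lintegral_ofReal_exp_lt_top
    (M := (G univ).toReal * ((1 + c ^ 2 / (2 * D) * t) ^ 2 * 3))
    (b := c ^ 2 / (2 * D) / 2) (by positivity))
  apply lintegral_mono_ae
  apply (ae_restrict_iff' measurableSet_Ici).2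
  apply ae_of_all
  intro h hh
  exact ENNReal.ofReal_le_ofReal (abs_Rhigh_le hc hD ht hh)

end integral

/-! ### Kernel measurability and `h`-integrals -/

lemma measurable_kernel (c D t r : ℝ) :
    Measurable (fun p : ℝ × ℝ =>
      ENNReal.ofReal (r * Real.exp (-(lam c D p.1 * (2 * t + p.2))))) := by
  apply ENNReal.measurable_ofReal.comp
  apply Measurable.const_mul
  apply Real.measurable_exp.comp
  apply Measurable.neg
  exact ((measurable_lam c D).comp measurable_fst).mul (measurable_const.add measurable_snd)

section hint
variable {c D t : ℝ}

lemma inner_lower (hc : 0 < c) (hD : 0 < D) (ht : 0 ≤ t) {μ : ℝ}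
    (hμ : μ ∈ Ico (0:ℝ) (c / (2 * D))) :
    ENNReal.ofReal (Real.exp (-(c ^ 2 / (2 * D) * (2 * t))))
        * ((ENNReal.ofReal (2 * D))⁻¹ * (ENNReal.ofReal (μ ^ 2))⁻¹)
      ≤ ∫⁻ h in Ici (0:ℝ), ENNReal.ofReal (Real.exp (-(lam c D μ * (2 * t + h)))) := by
  have key : ∀ h : ℝ, ENNReal.ofReal (Real.exp (-(lam c D μ * (2 * t + h))))
      = ENNReal.ofReal (Real.exp (-(lam c D μ * (2 * t))))
        * ENNReal.ofReal (Real.exp (-(lam c D μ * h))) := by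
    intro h
    rw [← ENNReal.ofReal_mul (Real.exp_pos _).le, ← Real.exp_add]
    congr 2
    ring
  simp only [key]
  rw [lintegral_const_mul' _ _ ENNReal.ofReal_ne_top]
  rcases eq_or_lt_of_le hμ.1 with h0 | h0
  · -- μ = 0 : the right-hand side is infinite
    have hlam0 : lam c D μ = 0 := by rw [← h0]; exact lam_zero hc hD
    have hint : ∫⁻ h in Ici (0:ℝ), ENNReal.ofReal (Real.exp (-(lam c D μ * h))) = ⊤ := by
      simp [hlam0, Real.volume_Ici]
    rw [hint, ENNReal.mul_top (by
      simp only [ne_eq, ENNReal.ofReal_eq_zero, not_le]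
      exact Real.exp_pos _)]
    exact le_top
  · have hlam : 0 < lam c D μ :=
      lt_of_lt_of_le (by positivity) (lam_lb hc hD hμ.1 hμ.2)
    rw [lintegral_exp_neg_mul hlam]
    have r1 : ENNReal.ofReal (1 / lam c D μ) = (ENNReal.ofReal (lam c D μ))⁻¹ := by
      rw [one_div, ENNReal.ofReal_inv_of_pos hlam]
    have hsplit : ENNReal.ofReal (2 * D * μ ^ 2)
        = ENNReal.ofReal (2 * D) * ENNReal.ofReal (μ ^ 2) := by
      rw [← ENNReal.ofReal_mul (by positivity : (0:ℝ) ≤ 2 * D)]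
    have r2 : (ENNReal.ofReal (2 * D))⁻¹ * (ENNReal.ofReal (μ ^ 2))⁻¹
        = (ENNReal.ofReal (2 * D * μ ^ 2))⁻¹ := by
      rw [hsplit, ENNReal.mul_inv (Or.inl (by
          simp only [ne_eq, ENNReal.ofReal_eq_zero, not_le]; positivity))
          (Or.inl ENNReal.ofReal_ne_top)]
    rw [r1, r2]
    apply mul_le_mul'
    · apply ENNReal.ofReal_le_ofReal
      apply Real.exp_le_exp.2
      have := lam_le (μ := μ) hc hD
      nlinarith
    · exact ENNReal.inv_le_inv.2 (ENNReal.ofReal_le_ofReal (lam_ub hc hD hμ.1 hμ.2))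

lemma inner_upper (hc : 0 < c) (hD : 0 < D) (ht : 0 ≤ t) {μ : ℝ}
    (hμ0 : 0 ≤ μ) (hκ : μ < c / (2 * D)) :
    (∫⁻ h in Ici (0:ℝ), ENNReal.ofReal (4 * Real.exp (-(lam c D μ * (2 * t + h)))))
      ≤ ENNReal.ofReal 4 * ((ENNReal.ofReal D)⁻¹ * (ENNReal.ofReal (μ ^ 2))⁻¹) := by
  rcases eq_or_lt_of_le hμ0 with h0 | h0
  · -- μ = 0 : right-hand side is infinite
    have : (ENNReal.ofReal (μ ^ 2))⁻¹ = ⊤ := by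
      rw [← h0]
      simp
    rw [this, ENNReal.mul_top (by
        simp only [ne_eq, ENNReal.inv_eq_zero]
        exact ENNReal.ofReal_ne_top),
      ENNReal.mul_top (by
        simp only [ne_eq, ENNReal.ofReal_eq_zero, not_le]
        norm_num)]
    exact le_top
  · have hlam : 0 < lam c D μ :=
      lt_of_lt_of_le (by positivity) (lam_lb hc hD hμ0 hκ)
    have key : ∀ h : ℝ, ENNReal.ofReal (4 * Real.exp (-(lam c D μ * (2 * t + h))))
        = ENNReal.ofReal (4 * Real.exp (-(lam c D μ * (2 * t))))
          * ENNReal.ofReal (Real.exp (-(lam c D μ * h))) := by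
      intro h
      rw [← ENNReal.ofReal_mul (by positivity), mul_assoc, ← Real.exp_add]
      congr 3
      ring
    simp only [key]
    rw [lintegral_const_mul' _ _ ENNReal.ofReal_ne_top, lintegral_exp_neg_mul hlam]
    have r1 : ENNReal.ofReal (1 / lam c D μ) = (ENNReal.ofReal (lam c D μ))⁻¹ := by
      rw [one_div, ENNReal.ofReal_inv_of_pos hlam]
    have hsplit : ENNReal.ofReal (D * μ ^ 2)
        = ENNReal.ofReal D * ENNReal.ofReal (μ ^ 2) := by
      rw [← ENNReal.ofReal_mul hD.le]
    have r2 : (ENNReal.ofReal D)⁻¹ * (ENNReal.ofReal (μ ^ 2))⁻¹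
        = (ENNReal.ofReal (D * μ ^ 2))⁻¹ := by
      rw [hsplit, ENNReal.mul_inv (Or.inl (by
          simp only [ne_eq, ENNReal.ofReal_eq_zero, not_le]; positivity))
          (Or.inl ENNReal.ofReal_ne_top)]
    rw [r1, r2]
    apply mul_le_mul'
    · apply ENNReal.ofReal_le_ofReal
      have h1 : Real.exp (-(lam c D μ * (2 * t))) ≤ 1 :=
        Real.exp_le_one_iff.2 (neg_nonpos.2 (by positivity))
      nlinarith [Real.exp_pos (-(lam c D μ * (2 * t)))]
    · exact ENNReal.inv_le_inv.2 (ENNReal.ofReal_le_ofReal (lam_lb hc hD hμ0 hκ))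

end hint

/-! ### The two main implications -/

section core
variable {c D t : ℝ} {G : Measure ℝ} [IsFiniteMeasure G]

lemma forward_core (hc : 0 < c) (hD : 0 < D) (ht : 0 ≤ t)
    (hI : ∫⁻ h in Ici (0:ℝ), ENNReal.ofReal (Rlow c D G t h) < ⊤) :
    (∫⁻ μ in Ico (0:ℝ) (c / (2 * D)), (ENNReal.ofReal (μ ^ 2))⁻¹ ∂G) < ⊤ := by
  have perh : ∀ h : ℝ, 0 ≤ h →
      (∫⁻ μ in Ico (0:ℝ) (c / (2 * D)),
          ENNReal.ofReal (Real.exp (-(lam c D μ * (2 * t + h)))) ∂G)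
        ≤ ENNReal.ofReal (Rlow c D G t h) := by
    intro h hh
    rw [ofReal_Rlow_eq hc hD ht hh]
    apply lintegral_mono_ae
    apply (ae_restrict_iff' measurableSet_Ico).2
    apply ae_of_all
    intro μ hμ
    exact ENNReal.ofReal_le_ofReal (exp_le_Htilde_mul hc hD hμ ht hh)
  have hm : Measurable (fun p : ℝ × ℝ =>
      ENNReal.ofReal (Real.exp (-(lam c D p.1 * (2 * t + p.2))))) := by
    simpa [one_mul] using measurable_kernel c D t 1
  have swap :
      (∫⁻ μ in Ico (0:ℝ) (c / (2 * D)), ∫⁻ h in Ici (0:ℝ),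
          ENNReal.ofReal (Real.exp (-(lam c D μ * (2 * t + h)))) ∂volume ∂G)
        = ∫⁻ h in Ici (0:ℝ), ∫⁻ μ in Ico (0:ℝ) (c / (2 * D)),
            ENNReal.ofReal (Real.exp (-(lam c D μ * (2 * t + h)))) ∂G ∂volume :=
    lintegral_lintegral_swap hm.aemeasurable
  have chain :
      (∫⁻ μ in Ico (0:ℝ) (c / (2 * D)),
          ENNReal.ofReal (Real.exp (-(c ^ 2 / (2 * D) * (2 * t))))
            * ((ENNReal.ofReal (2 * D))⁻¹ * (ENNReal.ofReal (μ ^ 2))⁻¹) ∂G)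
        ≤ ∫⁻ h in Ici (0:ℝ), ENNReal.ofReal (Rlow c D G t h) := by
    calc (∫⁻ μ in Ico (0:ℝ) (c / (2 * D)),
            ENNReal.ofReal (Real.exp (-(c ^ 2 / (2 * D) * (2 * t))))
              * ((ENNReal.ofReal (2 * D))⁻¹ * (ENNReal.ofReal (μ ^ 2))⁻¹) ∂G)
        ≤ ∫⁻ μ in Ico (0:ℝ) (c / (2 * D)), ∫⁻ h in Ici (0:ℝ),
            ENNReal.ofReal (Real.exp (-(lam c D μ * (2 * t + h)))) ∂volume ∂G := by
          apply lintegral_mono_ae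
          apply (ae_restrict_iff' measurableSet_Ico).2
          apply ae_of_all
          intro μ hμ
          exact inner_lower hc hD ht hμ
      _ = _ := swap
      _ ≤ ∫⁻ h in Ici (0:ℝ), ENNReal.ofReal (Rlow c D G t h) := by
          apply lintegral_mono_ae
          apply (ae_restrict_iff' measurableSet_Ici).2
          exact ae_of_all _ perh
  set cst := ENNReal.ofReal (Real.exp (-(c ^ 2 / (2 * D) * (2 * t))))
      * (ENNReal.ofReal (2 * D))⁻¹ with hcst
  have hcstne : cst ≠ ⊤ := by
    apply ENNReal.mul_ne_top ENNReal.ofReal_ne_top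
    rw [ENNReal.inv_ne_top]
    simp only [ne_eq, ENNReal.ofReal_eq_zero, not_le]
    positivity
  have hcst0 : cst ≠ 0 := by
    apply mul_ne_zero
    · simp only [ne_eq, ENNReal.ofReal_eq_zero, not_le]
      exact Real.exp_pos _
    · simp [ENNReal.inv_eq_zero, ENNReal.ofReal_ne_top, ENNReal.mul_eq_top]
  have pull : (∫⁻ μ in Ico (0:ℝ) (c / (2 * D)),
        ENNReal.ofReal (Real.exp (-(c ^ 2 / (2 * D) * (2 * t))))
          * ((ENNReal.ofReal (2 * D))⁻¹ * (ENNReal.ofReal (μ ^ 2))⁻¹) ∂G)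
      = cst * ∫⁻ μ in Ico (0:ℝ) (c / (2 * D)), (ENNReal.ofReal (μ ^ 2))⁻¹ ∂G := by
    rw [← lintegral_const_mul' cst _ hcstne]
    congr 1
    funext μ
    rw [hcst]
    ring
  rw [pull] at chain
  by_contra hJ
  rw [not_lt, top_le_iff] at hJ
  rw [hJ, ENNReal.mul_top hcst0] at chain
  exact absurd (lt_of_le_of_lt chain hI) (lt_irrefl ⊤)

lemma converse_core (hc : 0 < c) (hD : 0 < D) (ht : 0 ≤ t)
    (hJ : (∫⁻ μ in Ico (0:ℝ) (c / (2 * D)), (ENNReal.ofReal (μ ^ 2))⁻¹ ∂G) < ⊤) :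
    ∫⁻ h in Ici (0:ℝ), ENNReal.ofReal (Rlow c D G t h) < ⊤ := by
  have hκ4 : (0:ℝ) ≤ c / (4 * D) := by positivity
  have hκ4le : c / (4 * D) ≤ c / (2 * D) := by
    rw [div_le_div_iff₀ (by positivity) (by positivity)]
    nlinarith
  set M3 := (1 + c ^ 2 / (2 * D) * t) ^ 2 * (1 + 2 * (c ^ 2 / (2 * D)) / (c ^ 2 / (16 * D)))
    with hM3
  -- pointwise decomposition in h
  have perh : ∀ h : ℝ, 0 ≤ h → ENNReal.ofReal (Rlow c D G t h)
      ≤ (∫⁻ μ in Ico (0:ℝ) (c / (4 * D)),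
            ENNReal.ofReal (4 * Real.exp (-(lam c D μ * (2 * t + h)))) ∂G)
        + ENNReal.ofReal (M3 * Real.exp (-(c ^ 2 / (16 * D) / 2 * h))) * G univ := by
    intro h hh
    rw [ofReal_Rlow_eq hc hD ht hh,
      ← Ico_union_Ico_eq_Ico hκ4 hκ4le,
      lintegral_union measurableSet_Ico Ico_disjoint_Ico_same]
    apply add_le_add
    · apply lintegral_mono_ae
      apply (ae_restrict_iff' measurableSet_Ico).2
      apply ae_of_all
      intro μ hμ
      exact ENNReal.ofReal_le_ofReal (Htilde_mul_le_small hc hD hμ ht hh)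
    · calc (∫⁻ μ in Ico (c / (4 * D)) (c / (2 * D)),
              ENNReal.ofReal (Htilde c D μ (t + h) * Htilde c D μ t) ∂G)
          ≤ ∫⁻ _ in Ico (c / (4 * D)) (c / (2 * D)),
              ENNReal.ofReal (M3 * Real.exp (-(c ^ 2 / (16 * D) / 2 * h))) ∂G := by
            apply lintegral_mono_ae
            apply (ae_restrict_iff' measurableSet_Ico).2
            apply ae_of_all
            intro μ hμ
            exact ENNReal.ofReal_le_ofReal (Htilde_mul_le_crit hc hD hμ ht hh)
        _ = ENNReal.ofReal (M3 * Real.exp (-(c ^ 2 / (16 * D) / 2 * h)))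
              * G (Ico (c / (4 * D)) (c / (2 * D))) := setLIntegral_const _ _
        _ ≤ ENNReal.ofReal (M3 * Real.exp (-(c ^ 2 / (16 * D) / 2 * h))) * G univ :=
            mul_le_mul_right (measure_mono (subset_univ _)) _
  have hg2meas : Measurable (fun h : ℝ =>
      ENNReal.ofReal (M3 * Real.exp (-(c ^ 2 / (16 * D) / 2 * h))) * G univ) := by
    apply Measurable.mul_const
    apply ENNReal.measurable_ofReal.comp
    apply Measurable.const_mul
    exact Real.measurable_exp.comp ((measurable_id.const_mul _).neg)
  have hm4 : Measurable (fun p : ℝ × ℝ =>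
      ENNReal.ofReal (4 * Real.exp (-(lam c D p.1 * (2 * t + p.2))))) :=
    measurable_kernel c D t 4
  have hA : (∫⁻ h in Ici (0:ℝ), ∫⁻ μ in Ico (0:ℝ) (c / (4 * D)),
        ENNReal.ofReal (4 * Real.exp (-(lam c D μ * (2 * t + h)))) ∂G ∂volume) < ⊤ := by
    rw [← lintegral_lintegral_swap hm4.aemeasurable]
    have step : (∫⁻ μ in Ico (0:ℝ) (c / (4 * D)), ∫⁻ h in Ici (0:ℝ),
          ENNReal.ofReal (4 * Real.exp (-(lam c D μ * (2 * t + h)))) ∂volume ∂G)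
        ≤ ∫⁻ μ in Ico (0:ℝ) (c / (4 * D)),
            ENNReal.ofReal 4 * ((ENNReal.ofReal D)⁻¹ * (ENNReal.ofReal (μ ^ 2))⁻¹) ∂G := by
      apply lintegral_mono_ae
      apply (ae_restrict_iff' measurableSet_Ico).2
      apply ae_of_all
      intro μ hμ
      exact inner_upper hc hD ht hμ.1 (lt_of_lt_of_le hμ.2 hκ4le)
    apply lt_of_le_of_lt step
    set cst := ENNReal.ofReal 4 * (ENNReal.ofReal D)⁻¹ with hcst
    have hcstne : cst ≠ ⊤ := by
      apply ENNReal.mul_ne_top ENNReal.ofReal_ne_top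
      rw [ENNReal.inv_ne_top]
      simp only [ne_eq, ENNReal.ofReal_eq_zero, not_le]
      exact hD
    have pull : (∫⁻ μ in Ico (0:ℝ) (c / (4 * D)),
          ENNReal.ofReal 4 * ((ENNReal.ofReal D)⁻¹ * (ENNReal.ofReal (μ ^ 2))⁻¹) ∂G)
        = cst * ∫⁻ μ in Ico (0:ℝ) (c / (4 * D)), (ENNReal.ofReal (μ ^ 2))⁻¹ ∂G := by
      rw [← lintegral_const_mul' cst _ hcstne]
      congr 1
      funext μ
      rw [hcst]
      ring
    rw [pull]
    apply ENNReal.mul_lt_top hcstne.lt_top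
    exact lt_of_le_of_lt (lintegral_mono_set (Ico_subset_Ico_right hκ4le)) hJ
  have hB : (∫⁻ h in Ici (0:ℝ),
        ENNReal.ofReal (M3 * Real.exp (-(c ^ 2 / (16 * D) / 2 * h))) * G univ ∂volume) < ⊤ := by
    rw [lintegral_mul_const' _ _ (measure_ne_top G univ)]
    exact ENNReal.mul_lt_top (lintegral_ofReal_exp_lt_top (by positivity)) (measure_lt_top G univ)
  calc (∫⁻ h in Ici (0:ℝ), ENNReal.ofReal (Rlow c D G t h))
      ≤ ∫⁻ h in Ici (0:ℝ), ((∫⁻ μ in Ico (0:ℝ) (c / (4 * D)),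
            ENNReal.ofReal (4 * Real.exp (-(lam c D μ * (2 * t + h)))) ∂G)
          + ENNReal.ofReal (M3 * Real.exp (-(c ^ 2 / (16 * D) / 2 * h))) * G univ) ∂volume := by
        apply lintegral_mono_ae
        apply (ae_restrict_iff' measurableSet_Ici).2
        exact ae_of_all _ perh
    _ = (∫⁻ h in Ici (0:ℝ), ∫⁻ μ in Ico (0:ℝ) (c / (4 * D)),
            ENNReal.ofReal (4 * Real.exp (-(lam c D μ * (2 * t + h)))) ∂G ∂volume)
        + ∫⁻ h in Ici (0:ℝ),
            ENNReal.ofReal (M3 * Real.exp (-(c ^ 2 / (16 * D) / 2 * h))) * G univ ∂volume :=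
        lintegral_add_right _ hg2meas
    _ < ⊤ := ENNReal.add_lt_top.2 ⟨hA, hB⟩

end core

/-- Short-range dependence at coincident spatial points:
`∫_0^∞ |R(1, t+h, t)| dh < ∞` if and only if `∫_{[0,c/(2D))} μ⁻² G(dμ) < ∞`
(the integrand being `+∞` at `μ = 0`), where
`R(1, t, t') = ∫ H̃(μ,t) H̃(μ,t') G(dμ)`. -/
theorem short_range_dependence_coincident
    (c D : ℝ) (hc : 0 < c) (hD : 0 < D)
    (G : MeasureTheory.Measure ℝ) [MeasureTheory.IsFiniteMeasure G]
    (hG0 : G (Set.Iio 0) = 0) (t : ℝ) (ht : 0 ≤ t) :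
    (∫⁻ h in Set.Ici (0 : ℝ),
        ENNReal.ofReal
          |∫ μ in Set.Ici (0 : ℝ), Htilde c D μ (t + h) * Htilde c D μ t ∂G| ∂volume) < ⊤
      ↔ (∫⁻ μ in Set.Ico (0 : ℝ) (c / (2 * D)), (ENNReal.ofReal (μ ^ 2))⁻¹ ∂G) < ⊤ := by
  have hb : (0:ℝ) < c ^ 2 / (2 * D) / 2 := by positivity
  set M2 := (G univ).toReal * ((1 + c ^ 2 / (2 * D) * t) ^ 2 * 3) with hM2
  have hgmeas : Measurable (fun h : ℝ =>
      ENNReal.ofReal (M2 * Real.exp (-(c ^ 2 / (2 * D) / 2 * h)))) := by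
    apply ENNReal.measurable_ofReal.comp
    apply Measurable.const_mul
    exact Real.measurable_exp.comp ((measurable_id.const_mul _).neg)
  constructor
  · intro hI
    apply forward_core hc hD ht
    calc (∫⁻ h in Ici (0:ℝ), ENNReal.ofReal (Rlow c D G t h))
        ≤ ∫⁻ h in Ici (0:ℝ),
            (ENNReal.ofReal |∫ μ in Ici (0:ℝ), Htilde c D μ (t + h) * Htilde c D μ t ∂G|
              + ENNReal.ofReal (M2 * Real.exp (-(c ^ 2 / (2 * D) / 2 * h)))) ∂volume := by
          apply lintegral_mono_ae
          apply (ae_restrict_iff' measurableSet_Ici).2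
          apply ae_of_all
          intro h hh
          have h1 := R_split (G := G) hc hD ht hh
          have h2 := abs_Rhigh_le (G := G) hc hD ht hh
          have key : Rlow c D G t h
              ≤ |∫ μ in Ici (0:ℝ), Htilde c D μ (t + h) * Htilde c D μ t ∂G|
                + M2 * Real.exp (-(c ^ 2 / (2 * D) / 2 * h)) := by
            have h3 := le_abs_self (∫ μ in Ici (0:ℝ), Htilde c D μ (t + h) * Htilde c D μ t ∂G)
            have h4 := neg_abs_le (Rhigh c D G t h)
            rw [hM2]
            linarith
          calc ENNReal.ofReal (Rlow c D G t h)
              ≤ ENNReal.ofReal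
                  (|∫ μ in Ici (0:ℝ), Htilde c D μ (t + h) * Htilde c D μ t ∂G|
                    + M2 * Real.exp (-(c ^ 2 / (2 * D) / 2 * h))) :=
                ENNReal.ofReal_le_ofReal key
            _ ≤ _ := ENNReal.ofReal_add_le
      _ = (∫⁻ h in Ici (0:ℝ),
            ENNReal.ofReal |∫ μ in Ici (0:ℝ), Htilde c D μ (t + h) * Htilde c D μ t ∂G| ∂volume)
          + ∫⁻ h in Ici (0:ℝ),
              ENNReal.ofReal (M2 * Real.exp (-(c ^ 2 / (2 * D) / 2 * h))) ∂volume :=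
          lintegral_add_right _ hgmeas
      _ < ⊤ := ENNReal.add_lt_top.2 ⟨hI, lintegral_ofReal_exp_lt_top hb⟩
  · intro hJ
    have hcore := converse_core (G := G) hc hD ht hJ
    calc (∫⁻ h in Ici (0:ℝ),
          ENNReal.ofReal |∫ μ in Ici (0:ℝ), Htilde c D μ (t + h) * Htilde c D μ t ∂G| ∂volume)
        ≤ ∫⁻ h in Ici (0:ℝ),
            (ENNReal.ofReal (Rlow c D G t h)
              + ENNReal.ofReal (M2 * Real.exp (-(c ^ 2 / (2 * D) / 2 * h)))) ∂volume := by
          apply lintegral_mono_ae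
          apply (ae_restrict_iff' measurableSet_Ici).2
          apply ae_of_all
          intro h hh
          have h1 := R_split (G := G) hc hD ht hh
          have h2 := abs_Rhigh_le (G := G) hc hD ht hh
          have h5 := Rlow_nonneg (G := G) hc hD ht hh
          have key : |∫ μ in Ici (0:ℝ), Htilde c D μ (t + h) * Htilde c D μ t ∂G|
              ≤ Rlow c D G t h + M2 * Real.exp (-(c ^ 2 / (2 * D) / 2 * h)) := by
            rw [h1, hM2]
            have h6 := abs_abs (Rhigh c D G t h)
            calc |Rlow c D G t h + Rhigh c D G t h|
                ≤ |Rlow c D G t h| + |Rhigh c D G t h| := abs_add_le _ _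
              _ = Rlow c D G t h + |Rhigh c D G t h| := by rw [abs_of_nonneg h5]
              _ ≤ _ := by linarith
          calc ENNReal.ofReal |∫ μ in Ici (0:ℝ), Htilde c D μ (t + h) * Htilde c D μ t ∂G|
              ≤ ENNReal.ofReal
                  (Rlow c D G t h + M2 * Real.exp (-(c ^ 2 / (2 * D) / 2 * h))) :=
                ENNReal.ofReal_le_ofReal key
            _ ≤ _ := ENNReal.ofReal_add_le
      _ = (∫⁻ h in Ici (0:ℝ), ENNReal.ofReal (Rlow c D G t h) ∂volume)
          + ∫⁻ h in Ici (0:ℝ),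
              ENNReal.ofReal (M2 * Real.exp (-(c ^ 2 / (2 * D) / 2 * h))) ∂volume :=
          lintegral_add_right _ hgmeas
      _ < ⊤ := ENNReal.add_lt_top.2 ⟨hcore, lintegral_ofReal_exp_lt_top hb⟩
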